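/- Coercivity of the hypocoercive Lyapunov function: let κᶜ be a constant with |κᶜ| < ν √γ_m. Then there exist ε > 0 and M > 0 such that for all w, v ∈ ℝ² with |w| > M one has ½|v|² + P(w) − (κᶜ/ν)(w^⊥ · v) ≥ (ε/2)(|w|² + |v|²). -/

import Mathlib

open Real Filter MeasureTheory intervalIntegral
open scoped RealInnerProductSpace Topology

noncomputable section

/-- Perpendicular rotation in the plane: `(a, b)^⊥ = (-b, a)`. -/
def perp (w : EuclideanSpace ℝ (Fin 2)) : EuclideanSpace ℝ (Fin 2) :=
  (WithLp.equiv 2 (Fin 2 → ℝ)).symm ![-(w 1), w 0]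

/-- The potential `P(w) = ∫_{r_p}^{‖w‖} r (f_d(r) − f_e(r)) dr`. -/
def pot (fd fe : ℝ → ℝ) (rp : ℝ) (w : EuclideanSpace ℝ (Fin 2)) : ℝ :=
  ∫ r in rp..‖w‖, r * (fd r - fe r)

lemma norm_perp (w : EuclideanSpace ℝ (Fin 2)) : ‖perp w‖ = ‖w‖ := by
  simp [perp, EuclideanSpace.norm_eq, Fin.sum_univ_two, Real.norm_eq_abs, sq_abs]
  ring_nf

set_option maxHeartbeats 1000000 in
/-- Coercivity of the hypocoercive Lyapunov function: if `|κᶜ| < ν √γ_m`, then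
there are `ε > 0` and `M > 0` such that for `|w| > M`,
`½|v|² + P(w) − (κᶜ/ν)(w^⊥·v) ≥ (ε/2)(|w|² + |v|²)`. -/
theorem lyapunov_coercivity
    (fd fe : ℝ → ℝ) (rp γm : ℝ) (hrp : 0 < rp) (hγm : 0 < γm)
    (hfd_lip : LocallyLipschitzOn (Set.Ioi (0:ℝ)) fd)
    (hfe_lip : LocallyLipschitzOn (Set.Ioi (0:ℝ)) fe)
    (hf_neg : ∀ r : ℝ, 0 < r → r < rp → fd r - fe r < 0)
    (hf_nonneg : ∀ r : ℝ, rp ≤ r → 0 ≤ fd r - fe r)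
    (hf_deriv : 0 < deriv (fun r => fd r - fe r) rp)
    (hfd_nonneg : ∀ r : ℝ, 0 < r → 0 ≤ fd r)
    (hfd_bdd : ∃ C : ℝ, ∀ r : ℝ, 0 < r → fd r ≤ C)
    (hfd_lim : Filter.Tendsto fd Filter.atTop (nhds γm))
    (hfe_nonneg : ∀ r : ℝ, 0 < r → 0 ≤ fe r)
    (hfe_div : ¬ MeasureTheory.IntegrableOn (fun r => r * fe r) (Set.Ioc 0 rp))
    (hfe_lim : Filter.Tendsto fe Filter.atTop (nhds 0))
    (ν : ℝ) (hν : 0 < ν) (κc : ℝ) (hκc : |κc| < ν * Real.sqrt γm) :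
    ∃ ε : ℝ, 0 < ε ∧ ∃ M : ℝ, 0 < M ∧
      ∀ w v : EuclideanSpace ℝ (Fin 2), M < ‖w‖ →
        ε / 2 * (‖w‖ ^ 2 + ‖v‖ ^ 2)
          ≤ ‖v‖ ^ 2 / 2 + pot fd fe rp w - κc / ν * (inner ℝ (perp w) v : ℝ) := by
  -- set up constants
  set k : ℝ := |κc| / ν with hk_def
  have hk0 : 0 ≤ k := div_nonneg (abs_nonneg _) hν.le
  have hkγ : k ^ 2 < γm := by
    rw [← Real.lt_sqrt hk0]
    rw [div_lt_iff₀ hν]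
    linarith [hκc, mul_comm ν (Real.sqrt γm)]
  set β : ℝ := (k ^ 2 + γm) / 2 with hβ_def
  have hβk : k ^ 2 < β := by simp only [hβ_def]; nlinarith
  have hβγ : β < γm := by simp only [hβ_def]; nlinarith
  have hβ0 : 0 < β := by nlinarith [sq_nonneg k]
  set D : ℝ := β - k ^ 2 with hD_def
  have hD : 0 < D := by simp only [hD_def]; linarith
  set ε : ℝ := min (1/2) (D / (2 * (1 + 2 * β))) with hε_def
  have hden : 0 < 2 * (1 + 2 * β) := by linarith
  have hε0 : 0 < ε := lt_min (by norm_num) (div_pos hD hden)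
  have hε1 : ε ≤ 1/2 := min_le_left _ _
  have hε2 : ε * (2 * (1 + 2 * β)) ≤ D := by
    have := min_le_right (1/2) (D / (2 * (1 + 2 * β)))
    calc ε * (2 * (1 + 2 * β)) ≤ D / (2 * (1 + 2 * β)) * (2 * (1 + 2 * β)) := by
          apply mul_le_mul_of_nonneg_right _ hden.le
          exact this
      _ = D := by field_simp
  -- eventually f ≥ β
  have hf_lim : Tendsto (fun r => fd r - fe r) atTop (nhds γm) := by
    simpa using hfd_lim.sub hfe_lim
  have hev : ∀ᶠ r in atTop, β ≤ fd r - fe r :=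
    hf_lim.eventually_const_le hβγ
  obtain ⟨R, hR⟩ := eventually_atTop.mp hev
  set R₀ : ℝ := max R rp with hR₀_def
  have hR₀rp : rp ≤ R₀ := le_max_right _ _
  have hR₀0 : 0 < R₀ := lt_of_lt_of_le hrp hR₀rp
  set C : ℝ := β * R₀ ^ 2 / 2 with hC_def
  have hC0 : 0 ≤ C := by positivity
  clear_value k β D ε R₀ C
  refine ⟨ε, hε0, R₀ + 2 * Real.sqrt (C / D) + 1, by positivity, ?_⟩
  intro w v hw
  set x : ℝ := ‖w‖ with hx_def
  set y : ℝ := ‖v‖ with hy_def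
  clear_value x y
  have hy0 : 0 ≤ y := by rw [hy_def]; exact norm_nonneg v
  have hxR₀ : R₀ < x := by
    have : (0:ℝ) ≤ 2 * Real.sqrt (C / D) := by positivity
    linarith
  have hx0 : 0 < x := lt_trans hR₀0 hxR₀
  -- C ≤ D/4 * x^2
  have hCM : C ≤ D / 4 * x ^ 2 := by
    have hs : Real.sqrt (C / D) ^ 2 = C / D := Real.sq_sqrt (by positivity)
    have h1 : 2 * Real.sqrt (C / D) < x := by linarith [hR₀0]
    have h2 : (2 * Real.sqrt (C / D)) ^ 2 ≤ x ^ 2 := by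
      apply sq_le_sq' _ h1.le
      nlinarith [Real.sqrt_nonneg (C / D)]
    have h3 : (2 * Real.sqrt (C / D)) ^ 2 = 4 * (C / D) := by rw [mul_pow]; rw [hs]; ring
    rw [h3] at h2
    have h4 := mul_le_mul_of_nonneg_right h2 hD.le
    rw [mul_assoc, div_mul_cancel₀ _ hD.ne'] at h4
    nlinarith [h4]
  -- continuity of integrand
  have hcont : ContinuousOn (fun r : ℝ => r * (fd r - fe r)) (Set.Ioi 0) :=
    (continuousOn_id).mul (hfd_lip.continuousOn.sub hfe_lip.continuousOn)
  have hint : ∀ a b : ℝ, rp ≤ a → a ≤ b →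
      IntervalIntegrable (fun r : ℝ => r * (fd r - fe r)) volume a b := by
    intro a b ha hab
    apply (hcont.mono ?_).intervalIntegrable
    intro r hr
    rw [Set.uIcc_of_le hab] at hr
    exact lt_of_lt_of_le hrp (le_trans ha hr.1)
  -- pot lower bound
  have hpot : β / 2 * x ^ 2 - C ≤ pot fd fe rp w := by
    have h1 := hint rp R₀ le_rfl hR₀rp
    have h2 := hint R₀ x hR₀rp hxR₀.le
    have hsplit : pot fd fe rp w =
        (∫ r in rp..R₀, r * (fd r - fe r)) + ∫ r in R₀..x, r * (fd r - fe r) := by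
      rw [pot, ← hx_def, ← intervalIntegral.integral_add_adjacent_intervals h1 h2]
    have hnn : 0 ≤ ∫ r in rp..R₀, r * (fd r - fe r) := by
      apply intervalIntegral.integral_nonneg hR₀rp
      intro r hr
      exact mul_nonneg (le_trans hrp.le hr.1) (hf_nonneg r hr.1)
    have hlow : β * ((x ^ 2 - R₀ ^ 2) / 2) ≤ ∫ r in R₀..x, r * (fd r - fe r) := by
      have heq : ∫ r in R₀..x, β * r = β * ((x ^ 2 - R₀ ^ 2) / 2) := by
        rw [intervalIntegral.integral_const_mul, integral_id]
      rw [← heq]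
      apply intervalIntegral.integral_mono_on hxR₀.le _ h2
      · intro r hr
        have hrR : R ≤ r := le_trans (by rw [hR₀_def]; exact le_max_left _ _ : R ≤ R₀) hr.1
        have hr0 : 0 ≤ r := le_trans hR₀0.le hr.1
        have := hR r hrR
        calc β * r = r * β := mul_comm _ _
          _ ≤ r * (fd r - fe r) := mul_le_mul_of_nonneg_left this hr0
      · exact (continuous_const.mul continuous_id).intervalIntegrable _ _
    rw [hsplit, hC_def]
    linarith
  -- cross term bound
  have hcross : κc / ν * (inner ℝ (perp w) v : ℝ) ≤ k * (x * y) := by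
    have h1 : |κc / ν * (inner ℝ (perp w) v : ℝ)| ≤ k * (x * y) := by
      rw [abs_mul, abs_div, abs_of_pos hν, ← hk_def]
      apply mul_le_mul_of_nonneg_left _ hk0
      calc |(inner ℝ (perp w) v : ℝ)| ≤ ‖perp w‖ * ‖v‖ := abs_real_inner_le_norm _ _
        _ = x * y := by rw [norm_perp, ← hx_def, ← hy_def]
    exact le_trans (le_abs_self _) h1
  -- final algebra
  have h1ε : (0:ℝ) < 1 - ε := by linarith
  have hsq : 2 * (1 - ε) * k * (x * y) ≤ (1 - ε) ^ 2 * y ^ 2 + k ^ 2 * x ^ 2 := by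
    nlinarith [sq_nonneg ((1 - ε) * y - k * x)]
  have hcoef : ε * (1 - ε) + k ^ 2 + D / 2 ≤ (1 - ε) * β := by
    nlinarith [hε2, mul_nonneg hε0.le hβ0.le, sq_nonneg ε]
  have key2 : (1 - ε) * (ε / 2 * (x ^ 2 + y ^ 2) + k * (x * y) + C)
      ≤ (1 - ε) * (y ^ 2 / 2 + β / 2 * x ^ 2) := by
    nlinarith [hsq, hCM, mul_le_mul_of_nonneg_right hcoef (sq_nonneg x),
      mul_nonneg hε0.le hC0]
  have key : ε / 2 * (x ^ 2 + y ^ 2) + k * (x * y) + C ≤ y ^ 2 / 2 + β / 2 * x ^ 2 :=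
    (mul_le_mul_iff_right₀ h1ε).mp key2
  linarith
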